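/- arXiv:1602.07755 — 8 statements merged into one kernel-verified Lean document; each statement's English description precedes it below -/
import Mathlib

section
/- The average vector field (AVF) method preserves energy exactly for Hamiltonian systems: if f(x) = S∇H(x) where S is a constant skew-symmetric matrix, and x' satisfies (x' - x)/h = ∫₀¹ f(ξx' + (1-ξ)x) dξ, then H(x') = H(x). -/
open Matrix

open intervalIntegral

/-- The average vector field (AVF) method preserves energy exactly for
Hamiltonian systems `f x = S ∇H x` with `S` constant skew-symmetric. -/
theorem avf_preserves_energy (n : ℕ) (H : (Fin n → ℝ) → ℝ) (hH : ContDiff ℝ 1 H)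
    (S : Matrix (Fin n) (Fin n) ℝ) (hS : Sᵀ = -S)
    (f : (Fin n → ℝ) → (Fin n → ℝ))
    (hf : ∀ x, f x = S.mulVec (fun i => fderiv ℝ H x (Pi.single i 1)))
    (h : ℝ) (hh : 0 < h) (x x' : Fin n → ℝ)
    (hstep : x' - x = h • ∫ ξ in (0:ℝ)..(1:ℝ), f (ξ • x' + (1 - ξ) • x)) :
    H x' = H x := by
  classical
  set γ : ℝ → (Fin n → ℝ) := fun ξ => ξ • x' + (1 - ξ) • x with hγdef
  set g : ℝ → (Fin n → ℝ) := fun ξ i => fderiv ℝ H (γ ξ) (Pi.single i 1) with hgdef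
  have hγcont : Continuous γ := by
    apply Continuous.add
    · exact continuous_id.smul continuous_const
    · exact (continuous_const.sub continuous_id).smul continuous_const
  have hHd : Differentiable ℝ H := hH.differentiable one_ne_zero
  have hfdcont : Continuous fun y => fderiv ℝ H y := hH.continuous_fderiv one_ne_zero
  have hgcont : Continuous g := by
    apply continuous_pi
    intro i
    exact (hfdcont.comp hγcont).clm_apply continuous_const
  -- the averaged gradient
  set v : Fin n → ℝ := ∫ ξ in (0:ℝ)..(1:ℝ), g ξ with hvdef
  -- step relation in terms of v
  have hint : ∀ i : Fin n, IntervalIntegrable (fun ξ => g ξ i) MeasureTheory.volume 0 1 :=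
    fun i => ((continuous_apply i).comp hgcont).intervalIntegrable 0 1
  have hgint : IntervalIntegrable g MeasureTheory.volume 0 1 :=
    hgcont.intervalIntegrable 0 1
  have hstep' : x' - x = h • S.mulVec v := by
    rw [hstep]
    congr 1
    have : ∀ ξ : ℝ, f (γ ξ) = (Matrix.mulVecLin S).toContinuousLinearMap (g ξ) := by
      intro ξ
      simp [hf, hgdef, Matrix.mulVecLin]
    calc (∫ ξ in (0:ℝ)..(1:ℝ), f (ξ • x' + (1 - ξ) • x))
        = ∫ ξ in (0:ℝ)..(1:ℝ), (Matrix.mulVecLin S).toContinuousLinearMap (g ξ) := by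
          simp_rw [← this]
          rfl
      _ = (Matrix.mulVecLin S).toContinuousLinearMap v :=
          ContinuousLinearMap.intervalIntegral_comp_comm _ hgint
      _ = S.mulVec v := rfl
  -- fundamental theorem of calculus along the segment
  have hγderiv : ∀ ξ : ℝ, HasDerivAt γ (x' - x) ξ := by
    intro ξ
    have h1 : HasDerivAt (fun t : ℝ => t • x') ((1:ℝ) • x') ξ :=
      (hasDerivAt_id ξ).smul_const x'
    have h2 : HasDerivAt (fun t : ℝ => (1 - t) • x) ((0 - 1 : ℝ) • x) ξ :=
      ((hasDerivAt_const ξ (1:ℝ)).sub (hasDerivAt_id ξ)).smul_const x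
    have := h1.add h2
    refine this.congr_deriv ?_
    simp [sub_eq_add_neg]
  have hderiv : ∀ ξ ∈ Set.uIcc (0:ℝ) 1,
      HasDerivAt (fun t => H (γ t)) (fderiv ℝ H (γ ξ) (x' - x)) ξ := by
    intro ξ _
    exact (hHd (γ ξ)).hasFDerivAt.comp_hasDerivAt ξ (hγderiv ξ)
  have hderint : IntervalIntegrable (fun ξ => fderiv ℝ H (γ ξ) (x' - x))
      MeasureTheory.volume 0 1 := by
    exact ((hfdcont.comp hγcont).clm_apply continuous_const).intervalIntegrable 0 1
  have hFTC : (∫ ξ in (0:ℝ)..(1:ℝ), fderiv ℝ H (γ ξ) (x' - x)) = H (γ 1) - H (γ 0) :=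
    intervalIntegral.integral_eq_sub_of_hasDerivAt hderiv hderint
  -- express the derivative via the gradient
  have hexp : ∀ ξ : ℝ, fderiv ℝ H (γ ξ) (x' - x) = ∑ i, (x' - x) i * g ξ i := by
    intro ξ
    have hd : (x' - x) = ∑ i, (x' - x) i • (Pi.single i (1:ℝ) : Fin n → ℝ) := by
      funext j
      simp [Finset.sum_apply, Pi.single_apply, Finset.sum_ite_eq']
    conv_lhs => rw [hd]
    rw [map_sum]
    congr 1
    funext i
    simp [hgdef, smul_eq_mul]
  have hsum : (∫ ξ in (0:ℝ)..(1:ℝ), fderiv ℝ H (γ ξ) (x' - x))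
      = (x' - x) ⬝ᵥ v := by
    simp_rw [hexp]
    rw [intervalIntegral.integral_finset_sum (fun i _ => (hint i).const_mul _)]
    simp_rw [intervalIntegral.integral_const_mul]
    have : ∀ i, (∫ ξ in (0:ℝ)..(1:ℝ), g ξ i) = v i := by
      intro i
      rw [hvdef]
      simpa using (ContinuousLinearMap.intervalIntegral_comp_comm
        (ContinuousLinearMap.proj (R := ℝ) (φ := fun _ : Fin n => ℝ) i) hgint)
    simp_rw [this]
    rfl
  -- skew-symmetry kills the quadratic form
  have hzero : S.mulVec v ⬝ᵥ v = 0 := by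
    have h1 : S.mulVec v ⬝ᵥ v = v ⬝ᵥ S.mulVec v := dotProduct_comm _ _
    have h2 : v ⬝ᵥ S.mulVec v = Sᵀ.mulVec v ⬝ᵥ v := by
      rw [Matrix.dotProduct_mulVec, ← Matrix.mulVec_transpose]
    rw [hS] at h2
    have : S.mulVec v ⬝ᵥ v = -(S.mulVec v ⬝ᵥ v) := by
      conv_lhs => rw [h1, h2]
      simp [Matrix.neg_mulVec, neg_dotProduct]
    linarith
  have hdot : (x' - x) ⬝ᵥ v = 0 := by
    rw [hstep', smul_dotProduct, smul_eq_mul, hzero, mul_zero]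
  have hγ0 : γ 0 = x := by simp [hγdef]
  have hγ1 : γ 1 = x' := by simp [hγdef]
  have := hFTC
  rw [hsum, hdot, hγ0, hγ1] at this
  linarith
end

section
/- The implicit midpoint rule preserves all quadratic first integrals: if I(x) = xᵀAx + bᵀx + c with A symmetric is a first integral of ẋ = f(x) (i.e., ∇I(x)·f(x) = 0 for all x), and x' satisfies (x' - x)/h = f((x + x')/2), then I(x') = I(x). -/
open Matrix

/-- The implicit midpoint rule preserves all quadratic first integrals. -/
theorem midpoint_preserves_quadratic_integrals (n : ℕ)
    (f : (Fin n → ℝ) → (Fin n → ℝ))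
    (A : Matrix (Fin n) (Fin n) ℝ) (hA : Aᵀ = A) (b : Fin n → ℝ) (c : ℝ)
    (I : (Fin n → ℝ) → ℝ)
    (hI : ∀ x, I x = x ⬝ᵥ A.mulVec x + b ⬝ᵥ x + c)
    (hint : ∀ x, ((2:ℝ) • A.mulVec x + b) ⬝ᵥ f x = 0)
    (h : ℝ) (hh : 0 < h) (x x' : Fin n → ℝ)
    (hstep : x' = x + h • f (((1:ℝ)/2) • (x + x'))) :
    I x' = I x := by
  set m := ((1:ℝ)/2) • (x + x') with hm
  set v := f m with hv
  have hsym : ∀ u w : Fin n → ℝ, u ⬝ᵥ A.mulVec w = w ⬝ᵥ A.mulVec u := by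
    intro u w
    rw [dotProduct_mulVec, ← mulVec_transpose, hA, dotProduct_comm]
  have hm' : m = x + (h/2) • v := by
    rw [hm, hstep]
    ext i
    simp [hv, ← hstep, hm]
    ring
  have hint' : ((2:ℝ) • A.mulVec m + b) ⬝ᵥ v = 0 := hint m
  rw [hm', Matrix.mulVec_add, Matrix.mulVec_smul] at hint'
  simp only [add_dotProduct, smul_dotProduct, smul_eq_mul] at hint'
  rw [hI, hI, hstep]
  simp only [dotProduct_add, add_dotProduct, Matrix.mulVec_add, Matrix.mulVec_smul,
    dotProduct_smul, smul_dotProduct, smul_eq_mul]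
  have h1 : x ⬝ᵥ A.mulVec v = v ⬝ᵥ A.mulVec x := hsym x v
  rw [dotProduct_comm (A.mulVec x) v, dotProduct_comm (A.mulVec v) v] at hint'
  nlinarith [hint', h1]
end

section
/- Kahan's method applied to a quadratic vector field coincides with the Runge–Kutta-type map (x' - x)/h = 2f((x+x')/2) - (1/2)f(x) - (1/2)f(x'): for f with components fᵢ(x) = Σⱼₖ aᵢⱼₖ xⱼxₖ + Σⱼ bᵢⱼ xⱼ + cᵢ with aᵢⱼₖ symmetric in j,k, the Kahan update (xᵢ' - xᵢ)/h = Σⱼₖ aᵢⱼₖ (xⱼxₖ' + xⱼ'xₖ)/2 + Σⱼ bᵢⱼ (xⱼ + xⱼ')/2 + cᵢ is equivalent to the above. -/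
/-- Kahan's method for quadratic vector fields coincides with the
Runge–Kutta-type map `(x'-x)/h = 2f((x+x')/2) - f(x)/2 - f(x')/2`. -/
theorem kahan_is_runge_kutta (n : ℕ)
    (a : Fin n → Fin n → Fin n → ℝ) (ha : ∀ i j k, a i j k = a i k j)
    (b : Fin n → Fin n → ℝ) (c : Fin n → ℝ)
    (f : (Fin n → ℝ) → (Fin n → ℝ))
    (hf : ∀ x i, f x i = (∑ j, ∑ k, a i j k * x j * x k) + (∑ j, b i j * x j) + c i)
    (h : ℝ) (x x' : Fin n → ℝ) :
    (∀ i, x' i - x i =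
        h * ((∑ j, ∑ k, a i j k * (x j * x' k + x' j * x k) / 2)
          + (∑ j, b i j * (x j + x' j) / 2) + c i)) ↔
    x' - x = h • ((2:ℝ) • f (((1:ℝ)/2) • (x + x'))
        - ((1:ℝ)/2) • f x - ((1:ℝ)/2) • f x') := by
  rw [funext_iff]
  apply forall_congr'
  intro i
  have hq : ∑ j, ∑ k, a i j k * (x j * x' k + x' j * x k) / 2 =
      2 * (∑ j, ∑ k, a i j k * (1/2*(x j + x' j)) * (1/2*(x k + x' k)))
      - 1/2 * (∑ j, ∑ k, a i j k * x j * x k)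
      - 1/2 * (∑ j, ∑ k, a i j k * x' j * x' k) := by
    simp only [Finset.mul_sum, ← Finset.sum_sub_distrib]
    exact Finset.sum_congr rfl fun j _ =>
      Finset.sum_congr rfl fun k _ => by ring
  have hl : ∑ j, b i j * (x j + x' j) / 2 =
      2 * (∑ j, b i j * (1/2*(x j + x' j)))
      - 1/2 * (∑ j, b i j * x j) - 1/2 * (∑ j, b i j * x' j) := by
    simp only [Finset.mul_sum, ← Finset.sum_sub_distrib]
    exact Finset.sum_congr rfl fun j _ => by ring
  have key : (∑ j, ∑ k, a i j k * (x j * x' k + x' j * x k) / 2)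
          + (∑ j, b i j * (x j + x' j) / 2) + c i
      = 2 * f (((1:ℝ)/2) • (x + x')) i - (1/2) * f x i - (1/2) * f x' i := by
    simp only [hf, Pi.smul_apply, Pi.add_apply, smul_eq_mul]
    rw [hq, hl]; ring
  simp only [Pi.sub_apply, Pi.smul_apply, smul_eq_mul, key]
end

section
/- Kahan's method preserves all linear first integrals of quadratic vector fields: if cᵀf(x) = 0 for all x, and x' is given by the Kahan update applied to f, then cᵀx' = cᵀx. -/
open Matrix

/-- Kahan's method preserves all linear first integrals of quadratic vector
fields. -/
theorem kahan_preserves_linear_integrals (n : ℕ)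
    (a : Fin n → Fin n → Fin n → ℝ) (ha : ∀ i j k, a i j k = a i k j)
    (b : Fin n → Fin n → ℝ) (c : Fin n → ℝ)
    (f : (Fin n → ℝ) → (Fin n → ℝ))
    (hf : ∀ x i, f x i = (∑ j, ∑ k, a i j k * x j * x k) + (∑ j, b i j * x j) + c i)
    (w : Fin n → ℝ) (hint : ∀ x, w ⬝ᵥ f x = 0)
    (h : ℝ) (x x' : Fin n → ℝ)
    (hstep : ∀ i, x' i - x i =
        h * ((∑ j, ∑ k, a i j k * (x j * x' k + x' j * x k) / 2)
          + (∑ j, b i j * (x j + x' j) / 2) + c i)) :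
    w ⬝ᵥ x' = w ⬝ᵥ x := by
  have key : ∀ i, x' i - x i =
      h * (f (x + x') i / 2 + 3/2 * f 0 i
        - (f x i + f (-x) i + f x' i + f (-x') i) / 4) := by
    intro i
    have e0 : (∑ j, ∑ k, a i j k * (x j * x' k + x' j * x k) / 2)
        = ((∑ j, ∑ k, a i j k * x j * x' k) + (∑ j, ∑ k, a i j k * x' j * x k)) / 2 := by
      simp only [← Finset.sum_add_distrib, ← Finset.sum_div]
      congr 1
      exact Finset.sum_congr rfl fun j _ => Finset.sum_congr rfl fun k _ => by ring
    have e0' : (∑ j, b i j * (x j + x' j) / 2)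
        = ((∑ j, b i j * x j) + (∑ j, b i j * x' j)) / 2 := by
      simp only [← Finset.sum_add_distrib, ← Finset.sum_div]
      congr 1
      exact Finset.sum_congr rfl fun j _ => by ring
    have e1 : f (x + x') i
        = (∑ j, ∑ k, a i j k * x j * x k) + (∑ j, ∑ k, a i j k * x j * x' k)
          + (∑ j, ∑ k, a i j k * x' j * x k) + (∑ j, ∑ k, a i j k * x' j * x' k)
          + ((∑ j, b i j * x j) + (∑ j, b i j * x' j)) + c i := by
      rw [hf]
      simp only [Pi.add_apply, ← Finset.sum_add_distrib]
      refine congrArg (· + c i) (Finset.sum_congr rfl fun j _ => ?_)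
      refine congrArg₂ (· + ·) (Finset.sum_congr rfl fun k _ => by ring) (by ring)
    have e2 : f 0 i = c i := by rw [hf]; simp
    have e3 : f x i = (∑ j, ∑ k, a i j k * x j * x k) + (∑ j, b i j * x j) + c i := hf x i
    have e4 : f (-x) i = (∑ j, ∑ k, a i j k * x j * x k) - (∑ j, b i j * x j) + c i := by
      rw [hf]
      simp only [Pi.neg_apply, mul_neg, neg_mul, neg_neg, Finset.sum_neg_distrib]
      ring
    have e5 : f x' i = (∑ j, ∑ k, a i j k * x' j * x' k) + (∑ j, b i j * x' j) + c i := hf x' i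
    have e6 : f (-x') i = (∑ j, ∑ k, a i j k * x' j * x' k) - (∑ j, b i j * x' j) + c i := by
      rw [hf]
      simp only [Pi.neg_apply, mul_neg, neg_mul, neg_neg, Finset.sum_neg_distrib]
      ring
    rw [hstep i, e0, e0', e1, e2, e3, e4, e5, e6]
    ring
  have hsum : w ⬝ᵥ x' - w ⬝ᵥ x = 0 := by
    have e1 := hint (x + x')
    have e2 := hint 0
    have e3 := hint x
    have e4 := hint (-x)
    have e5 := hint x'
    have e6 := hint (-x')
    simp only [dotProduct] at e1 e2 e3 e4 e5 e6 ⊢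
    rw [← Finset.sum_sub_distrib]
    calc ∑ i, (w i * x' i - w i * x i)
        = ∑ i, w i * (x' i - x i) := by
          apply Finset.sum_congr rfl; intros; ring
      _ = ∑ i, (h/2 * (w i * f (x + x') i) + 3*h/2 * (w i * f 0 i)
            - h/4 * (w i * f x i) - h/4 * (w i * f (-x) i)
            - h/4 * (w i * f x' i) - h/4 * (w i * f (-x') i)) := by
          apply Finset.sum_congr rfl; intro i _; rw [key i]; ring
      _ = 0 := by
          simp only [Finset.sum_sub_distrib, Finset.sum_add_distrib,
            ← Finset.mul_sum, e1, e2, e3, e4, e5, e6]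
          ring
  linarith
end

section
/- The Simpson-rule Runge–Kutta method (x'-x)/h = (1/6)[f(x) + 4f((x+x')/2) + f(x')] preserves every quartic Hamiltonian: if H is a polynomial of degree at most 4 and f(x) = S∇H(x) with S constant skew-symmetric, then H(x') = H(x). -/
open Matrix MvPolynomial

section SimpsonAux

lemma mv_hasFDerivAt {n : ℕ} (P : MvPolynomial (Fin n) ℝ) (y : Fin n → ℝ) :
    HasFDerivAt (fun z : Fin n → ℝ => MvPolynomial.eval z P)
      (∑ i : Fin n, MvPolynomial.eval y (pderiv i P) •
        (ContinuousLinearMap.proj i : (Fin n → ℝ) →L[ℝ] ℝ)) y := by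
  induction P using MvPolynomial.induction_on with
  | C a =>
      simp only [eval_C, pderiv_C, _root_.map_zero, zero_smul, Finset.sum_const_zero]
      exact hasFDerivAt_const _ _
  | add p q hp hq =>
      simp only [_root_.map_add, _root_.map_add, add_smul, Finset.sum_add_distrib]
      exact hp.add hq
  | mul_X p i hp =>
      have hXi : HasFDerivAt (fun z : Fin n → ℝ => z i)
          (ContinuousLinearMap.proj i : (Fin n → ℝ) →L[ℝ] ℝ) y := hasFDerivAt_apply i y
      have := hp.mul hXi
      simp only [_root_.map_mul, eval_X, Pi.mul_def] at this ⊢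
      refine this.congr_fderiv ?_
      symm
      ext u
      simp only [ContinuousLinearMap.sum_apply, ContinuousLinearMap.smul_apply,
        ContinuousLinearMap.add_apply, ContinuousLinearMap.proj_apply, smul_eq_mul,
        pderiv_mul, _root_.map_add, _root_.map_mul, eval_X]

      have key : ∀ j : Fin n, MvPolynomial.eval y (pderiv j (X i : MvPolynomial (Fin n) ℝ))
          = if j = i then (1:ℝ) else 0 := by
        intro j
        rcases eq_or_ne j i with hji | hji
        · subst hji; simp
        · rw [pderiv_X, Pi.single_apply, if_neg (Ne.symm hji), if_neg hji, _root_.map_zero]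
      simp only [key, mul_ite, mul_one, mul_zero, add_mul, ite_mul, zero_mul,
        Finset.sum_add_distrib, Finset.sum_ite_eq' Finset.univ i, Finset.mem_univ, if_true]
      rw [add_comm]
      congr 1
      rw [Finset.mul_sum]
      exact Finset.sum_congr rfl fun j _ => by ring


lemma natDegree_aeval_le' {n : ℕ} (P : MvPolynomial (Fin n) ℝ) (g : Fin n → Polynomial ℝ)
    (hg : ∀ i, (g i).natDegree ≤ 1) :
    (MvPolynomial.aeval g P).natDegree ≤ P.totalDegree := by
  conv_lhs => rw [MvPolynomial.as_sum P, _root_.map_sum]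
  apply Polynomial.natDegree_sum_le_of_forall_le
  intro v hv
  rw [MvPolynomial.aeval_monomial]
  refine le_trans (Polynomial.natDegree_mul_le) ?_
  have h1 : (algebraMap ℝ (Polynomial ℝ) (MvPolynomial.coeff v P)).natDegree = 0 := by
    simp [Polynomial.algebraMap_eq]
  rw [h1, zero_add]
  refine le_trans ?_ (MvPolynomial.le_totalDegree hv)
  rw [Finsupp.prod]
  refine le_trans (Polynomial.natDegree_prod_le _ _) ?_
  rw [Finsupp.sum]
  apply Finset.sum_le_sum
  intro i _
  calc (g i ^ v i).natDegree ≤ v i * (g i).natDegree := Polynomial.natDegree_pow_le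
    _ ≤ v i * 1 := Nat.mul_le_mul_left _ (hg i)
    _ = v i := Nat.mul_one _

lemma simpson_exact (Q : Polynomial ℝ) (hQ : Q.natDegree ≤ 4) :
    Q.eval 1 - Q.eval 0 = (1/6) * (Q.derivative.eval 0 + 4 * Q.derivative.eval (1/2)
      + Q.derivative.eval 1) := by
  have h5 : Q.natDegree < 5 := Nat.lt_succ_of_le hQ
  conv_lhs => rw [Polynomial.as_sum_range' Q 5 h5]
  conv_rhs => rw [Polynomial.as_sum_range' Q 5 h5]
  simp only [Polynomial.derivative_sum, Polynomial.derivative_C_mul, Polynomial.derivative_X_pow,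
    Polynomial.eval_finset_sum, Polynomial.eval_mul, Polynomial.eval_C, Polynomial.eval_pow,
    Polynomial.eval_X, Polynomial.eval_natCast, Finset.sum_range_succ, Finset.sum_range_zero]
  norm_num
  ring

end SimpsonAux


/-- The Simpson-rule Runge–Kutta method preserves every quartic Hamiltonian. -/
theorem simpson_rk_preserves_quartic_hamiltonians (n : ℕ)
    (H : (Fin n → ℝ) → ℝ)
    (hH : ∃ P : MvPolynomial (Fin n) ℝ, P.totalDegree ≤ 4 ∧
      ∀ x, H x = MvPolynomial.eval x P)
    (S : Matrix (Fin n) (Fin n) ℝ) (hS : Sᵀ = -S)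
    (f : (Fin n → ℝ) → (Fin n → ℝ))
    (hf : ∀ x, f x = S.mulVec (fun i => fderiv ℝ H x (Pi.single i 1)))
    (h : ℝ) (hh : 0 < h) (x x' : Fin n → ℝ)
    (hstep : x' = x + (h/6) • (f x + (4:ℝ) • f (((1:ℝ)/2) • (x + x')) + f x')) :
    H x' = H x := by
  obtain ⟨P, hPdeg, hPeval⟩ := hH
  have hHfun : H = fun z => MvPolynomial.eval z P := funext hPeval
  subst hHfun
  set G : (Fin n → ℝ) → (Fin n → ℝ) :=
    fun y i => MvPolynomial.eval y (pderiv i P) with hG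
  -- the gradient via fderiv
  have hgrad : ∀ y : Fin n → ℝ,
      (fun i => fderiv ℝ (fun z => MvPolynomial.eval z P) y (Pi.single i 1)) = G y := by
    intro y
    funext i
    rw [(mv_hasFDerivAt P y).fderiv]
    simp only [ContinuousLinearMap.sum_apply, ContinuousLinearMap.smul_apply,
      ContinuousLinearMap.proj_apply, smul_eq_mul]
    rw [Finset.sum_eq_single i (fun j _ hj => by rw [Pi.single_eq_of_ne hj, mul_zero])
      (fun hi => absurd (Finset.mem_univ i) hi)]
    rw [Pi.single_eq_same, mul_one]
  have hfG : ∀ y, f y = S.mulVec (G y) := by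
    intro y; rw [hf y, hgrad y]
  -- setup
  set d : Fin n → ℝ := x' - x with hd
  have hx' : x' = x + d := by rw [hd]; abel
  set m : Fin n → ℝ := ((1:ℝ)/2) • (x + x') with hm
  have hmd : m = x + ((1:ℝ)/2) • d := by
    rw [hm, hd]; ext i; simp; ring
  -- the curve polynomial
  set Q : Polynomial ℝ :=
    MvPolynomial.aeval (fun i => Polynomial.C (x i) + Polynomial.C (d i) * Polynomial.X) P with hQ
  have hQeval : ∀ t : ℝ, Q.eval t = MvPolynomial.eval (x + t • d) P := by
    intro t
    rw [hQ]
    have key := MvPolynomial.comp_aeval_apply (Polynomial.aeval t : Polynomial ℝ →ₐ[ℝ] ℝ)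
      (f := fun i => Polynomial.C (x i) + Polynomial.C (d i) * Polynomial.X) P
    have e1 : Polynomial.eval t (MvPolynomial.aeval
        (fun i => Polynomial.C (x i) + Polynomial.C (d i) * Polynomial.X) P)
        = Polynomial.aeval t (MvPolynomial.aeval
        (fun i => Polynomial.C (x i) + Polynomial.C (d i) * Polynomial.X) P) :=
      (congrFun (Polynomial.coe_aeval_eq_eval t) _).symm
    have h2 : (fun i => (Polynomial.aeval t : Polynomial ℝ →ₐ[ℝ] ℝ)
          (Polynomial.C (x i) + Polynomial.C (d i) * Polynomial.X))
        = x + t • d := by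
      funext i
      simp only [_root_.map_add, _root_.map_mul, Polynomial.aeval_C, Polynomial.aeval_X,
        Pi.add_apply, Pi.smul_apply, smul_eq_mul, Algebra.algebraMap_self, RingHom.id_apply]
      ring
    rw [e1, key, h2]
    have e2 : MvPolynomial.aeval (x + t • d) P = MvPolynomial.eval (x + t • d) P := by
      rw [← MvPolynomial.coe_aeval_eq_eval]; rfl
    exact e2
  have hQdeg : Q.natDegree ≤ 4 := by
    refine le_trans (natDegree_aeval_le' P _ (fun i => ?_)) hPdeg
    refine le_trans (Polynomial.natDegree_add_le _ _) ?_
    simp only [Polynomial.natDegree_C, zero_le, max_le_iff, true_and]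
    exact le_trans (Polynomial.natDegree_mul_le) (by simp)
  -- derivative of the curve
  have hchain : ∀ t : ℝ, HasDerivAt (fun s : ℝ => MvPolynomial.eval (x + s • d) P)
      (∑ i, MvPolynomial.eval (x + t • d) (pderiv i P) * d i) t := by
    intro t
    have hc : HasDerivAt (fun s : ℝ => x + s • d) d t := by
      simpa using ((hasDerivAt_id t).smul_const d).const_add x
    have := (mv_hasFDerivAt P (x + t • d)).comp_hasDerivAt t hc
    refine this.congr_deriv ?_
    symm
    simp [ContinuousLinearMap.sum_apply]
  have hQ' : ∀ t : ℝ, Q.derivative.eval t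
      = ∑ i, MvPolynomial.eval (x + t • d) (pderiv i P) * d i := by
    intro t
    have h1 : HasDerivAt (fun s : ℝ => Q.eval s) (Q.derivative.eval t) t :=
      Q.hasDerivAt t
    have h2 : HasDerivAt (fun s : ℝ => Q.eval s)
        (∑ i, MvPolynomial.eval (x + t • d) (pderiv i P) * d i) t := by
      simp only [hQeval]; exact hchain t
    exact h1.unique h2
  -- Simpson identity
  have hsimp := simpson_exact Q hQdeg
  rw [hQeval 1, hQeval 0, hQ' 0, hQ' (1/2), hQ' 1] at hsimp
  simp only [one_smul, zero_smul, add_zero] at hsimp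
  have hx1 : x + d = x' := hx'.symm
  have hx2 : x + (1/2 : ℝ) • d = m := hmd.symm
  rw [hx1, hx2] at hsimp
  -- rewrite RHS as dot product
  set v : Fin n → ℝ := G x + (4:ℝ) • G m + G x' with hv
  have hrhs : MvPolynomial.eval x' P - MvPolynomial.eval x P = (1/6) * (v ⬝ᵥ d) := by
    rw [hsimp, hv]
    simp only [dotProduct, Pi.add_apply, Pi.smul_apply, smul_eq_mul, add_mul,
      Finset.sum_add_distrib, Finset.mul_sum, hG]
    ring
  -- d in terms of v
  have hdv : d = (h/6) • S.mulVec v := by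
    rw [hd, hstep]
    simp only [add_sub_cancel_left]
    rw [hfG, hfG, hfG, hv]
    rw [Matrix.mulVec_add, Matrix.mulVec_add, Matrix.mulVec_smul]
  have hzero : v ⬝ᵥ S.mulVec v = 0 := by
    have h1 : v ⬝ᵥ S.mulVec v = -(v ⬝ᵥ S.mulVec v) := by
      conv_lhs => rw [Matrix.dotProduct_mulVec, ← Matrix.mulVec_transpose, hS,
        Matrix.neg_mulVec, neg_dotProduct, dotProduct_comm]
    linarith
  have : v ⬝ᵥ d = 0 := by
    rw [hdv, dotProduct_smul, hzero, smul_zero]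
  rw [hPeval x', hPeval x]
  have := hrhs
  rw [‹v ⬝ᵥ d = 0›, mul_zero] at this
  linarith [this]
end

section
/- A map of the triangular form x₁ = g₁(x₁',x₂,x₃), x₂' = g₂(x₁',x₂,x₃), x₃' = g₃(x₁',x₂',x₃) in ℝ³ is volume-preserving if and only if ∂x₁/∂x₁' = (∂x₂'/∂x₂)(∂x₃'/∂x₃), assuming the map (x₁,x₂,x₃) ↦ (x₁',x₂',x₃') is a well-defined differentiable map with ∂g₁/∂x₁' ≠ 0. -/
open ContinuousLinearMap

noncomputable def e3aux : (ℝ × ℝ × ℝ) ≃ₗ[ℝ] (Fin 3 → ℝ) :=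
{ toFun := fun v => ![v.1, v.2.1, v.2.2]
  invFun := fun f => (f 0, f 1, f 2)
  map_add' := by intro v w; funext i; fin_cases i <;> simp
  map_smul' := by intro c v; funext i; fin_cases i <;> simp
  left_inv := by intro v; simp
  right_inv := by intro f; funext i; fin_cases i <;> simp }

noncomputable def b3aux : Module.Basis (Fin 3) ℝ (ℝ × ℝ × ℝ) := Module.Basis.ofEquivFun e3aux

lemma det_eq_aux (f : (ℝ × ℝ × ℝ) →ₗ[ℝ] (ℝ × ℝ × ℝ)) :
    LinearMap.det f = Matrix.det !![(f (1,0,0)).1, (f (0,1,0)).1, (f (0,0,1)).1;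
      (f (1,0,0)).2.1, (f (0,1,0)).2.1, (f (0,0,1)).2.1;
      (f (1,0,0)).2.2, (f (0,1,0)).2.2, (f (0,0,1)).2.2] := by
  rw [← LinearMap.det_toMatrix b3aux]
  congr 1
  funext i j
  fin_cases i <;> fin_cases j <;>
    simp [LinearMap.toMatrix_apply, b3aux, Module.Basis.ofEquivFun_repr_apply, e3aux, Pi.single,
      Function.update]

lemma clm_expand_aux (G : (ℝ × ℝ × ℝ) →L[ℝ] ℝ) (x y z : ℝ) :
    G (x, y, z) = x * G (1,0,0) + y * G (0,1,0) + z * G (0,0,1) := by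
  have h : (x, y, z) = x • ((1:ℝ),(0:ℝ),(0:ℝ)) + y • ((0:ℝ),(1:ℝ),(0:ℝ)) + z • ((0:ℝ),(0:ℝ),(1:ℝ)) := by
    simp [Prod.ext_iff]
  rw [h, map_add, map_add, map_smul, map_smul, map_smul, smul_eq_mul, smul_eq_mul, smul_eq_mul]

/-- A triangular map in ℝ³ of the form `x₁ = g₁(x₁',x₂,x₃)`,
`x₂' = g₂(x₁',x₂,x₃)`, `x₃' = g₃(x₁',x₂',x₃)` is volume-preserving iff
`∂x₁/∂x₁' = (∂x₂'/∂x₂)(∂x₃'/∂x₃)`. -/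
theorem triangular_map_volume_preserving_iff
    (g₁ g₂ g₃ : ℝ → ℝ → ℝ → ℝ)
    (hg₁ : ContDiff ℝ 1 (fun p : ℝ × ℝ × ℝ => g₁ p.1 p.2.1 p.2.2))
    (hg₂ : ContDiff ℝ 1 (fun p : ℝ × ℝ × ℝ => g₂ p.1 p.2.1 p.2.2))
    (hg₃ : ContDiff ℝ 1 (fun p : ℝ × ℝ × ℝ => g₃ p.1 p.2.1 p.2.2))
    (hg₁' : ∀ a b c, deriv (fun s => g₁ s b c) a ≠ 0)
    (Φ : ℝ × ℝ × ℝ → ℝ × ℝ × ℝ) (hΦ : ContDiff ℝ 1 Φ)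
    (hrel : ∀ p : ℝ × ℝ × ℝ,
      p.1 = g₁ (Φ p).1 p.2.1 p.2.2 ∧
      (Φ p).2.1 = g₂ (Φ p).1 p.2.1 p.2.2 ∧
      (Φ p).2.2 = g₃ (Φ p).1 (Φ p).2.1 p.2.2)
    (p : ℝ × ℝ × ℝ) :
    LinearMap.det (fderiv ℝ Φ p).toLinearMap = 1 ↔
      deriv (fun s => g₁ s p.2.1 p.2.2) (Φ p).1 =
        deriv (fun s => g₂ (Φ p).1 s p.2.2) p.2.1 *
          deriv (fun s => g₃ (Φ p).1 (Φ p).2.1 s) p.2.2 := by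
  set T := fderiv ℝ Φ p with hTdef
  have hT : HasFDerivAt Φ T p := (hΦ.differentiable one_ne_zero p).hasFDerivAt
  set q₁ : ℝ × ℝ × ℝ := ((Φ p).1, p.2.1, p.2.2) with hq₁
  set q₃ : ℝ × ℝ × ℝ := ((Φ p).1, (Φ p).2.1, p.2.2) with hq₃
  set G₁ := fderiv ℝ (fun q : ℝ × ℝ × ℝ => g₁ q.1 q.2.1 q.2.2) q₁ with hG₁def
  set G₂ := fderiv ℝ (fun q : ℝ × ℝ × ℝ => g₂ q.1 q.2.1 q.2.2) q₁ with hG₂def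
  set G₃ := fderiv ℝ (fun q : ℝ × ℝ × ℝ => g₃ q.1 q.2.1 q.2.2) q₃ with hG₃def
  have hGd₁ : HasFDerivAt (fun q : ℝ × ℝ × ℝ => g₁ q.1 q.2.1 q.2.2) G₁ q₁ :=
    (hg₁.differentiable one_ne_zero _).hasFDerivAt
  have hGd₂ : HasFDerivAt (fun q : ℝ × ℝ × ℝ => g₂ q.1 q.2.1 q.2.2) G₂ q₁ :=
    (hg₂.differentiable one_ne_zero _).hasFDerivAt
  have hGd₃ : HasFDerivAt (fun q : ℝ × ℝ × ℝ => g₃ q.1 q.2.1 q.2.2) G₃ q₃ :=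
    (hg₃.differentiable one_ne_zero _).hasFDerivAt
  -- identify the partial derivatives with CLM values
  have hpart₁ : deriv (fun s => g₁ s p.2.1 p.2.2) (Φ p).1 = G₁ (1,0,0) := by
    have hinner : HasDerivAt (fun s : ℝ => (s, p.2.1, p.2.2)) ((1:ℝ),(0:ℝ),(0:ℝ)) (Φ p).1 :=
      HasDerivAt.prodMk (hasDerivAt_id _) (hasDerivAt_const _ _)
    exact (hGd₁.comp_hasDerivAt _ hinner).deriv
  have hpart₂ : deriv (fun s => g₂ (Φ p).1 s p.2.2) p.2.1 = G₂ (0,1,0) := by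
    have hinner : HasDerivAt (fun s : ℝ => ((Φ p).1, s, p.2.2)) ((0:ℝ),(1:ℝ),(0:ℝ)) p.2.1 :=
      HasDerivAt.prodMk (hasDerivAt_const _ _) (HasDerivAt.prodMk (hasDerivAt_id _) (hasDerivAt_const _ _))
    exact (hGd₂.comp_hasDerivAt _ hinner).deriv
  have hpart₃ : deriv (fun s => g₃ (Φ p).1 (Φ p).2.1 s) p.2.2 = G₃ (0,0,1) := by
    have hinner : HasDerivAt (fun s : ℝ => ((Φ p).1, (Φ p).2.1, s)) ((0:ℝ),(0:ℝ),(1:ℝ)) p.2.2 :=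
      HasDerivAt.prodMk (hasDerivAt_const _ _) (HasDerivAt.prodMk (hasDerivAt_const _ _) (hasDerivAt_id _))
    exact (hGd₃.comp_hasDerivAt _ hinner).deriv
  -- inner maps and chain rule for the three relations
  have hF₁ : HasFDerivAt (fun q : ℝ × ℝ × ℝ => ((Φ q).1, q.2))
      (((fst ℝ ℝ (ℝ × ℝ)).comp T).prod (snd ℝ ℝ (ℝ × ℝ))) p :=
    HasFDerivAt.prodMk (hasFDerivAt_fst.comp p hT) hasFDerivAt_snd
  have hF₃ : HasFDerivAt (fun q : ℝ × ℝ × ℝ => ((Φ q).1, (Φ q).2.1, q.2.2))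
      (((fst ℝ ℝ (ℝ × ℝ)).comp T).prod
        (((fst ℝ ℝ ℝ).comp ((snd ℝ ℝ (ℝ × ℝ)).comp T)).prod
          ((snd ℝ ℝ ℝ).comp (snd ℝ ℝ (ℝ × ℝ))))) p :=
    HasFDerivAt.prodMk (hasFDerivAt_fst.comp p hT)
      (HasFDerivAt.prodMk ((hasFDerivAt_fst.comp p (hasFDerivAt_snd.comp p hT)))
        (hasFDerivAt_snd.comp p hasFDerivAt_snd))
  -- relation 1
  have heq₁ : ∀ v : ℝ × ℝ × ℝ, v.1 = G₁ ((T v).1, v.2.1, v.2.2) := by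
    intro v
    have hcomp : HasFDerivAt (fun q : ℝ × ℝ × ℝ => g₁ (Φ q).1 q.2.1 q.2.2)
        (G₁.comp ((((fst ℝ ℝ (ℝ × ℝ)).comp T).prod (snd ℝ ℝ (ℝ × ℝ))))) p := HasFDerivAt.comp p (f := fun q : ℝ × ℝ × ℝ => ((Φ q).1, q.2)) hGd₁ hF₁
    have hL : HasFDerivAt (fun q : ℝ × ℝ × ℝ => q.1)
        (G₁.comp ((((fst ℝ ℝ (ℝ × ℝ)).comp T).prod (snd ℝ ℝ (ℝ × ℝ))))) p := by
      apply hcomp.congr_of_eventuallyEq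
      filter_upwards with q using (hrel q).1
    have h := congrArg (fun L => L v) (hL.unique hasFDerivAt_fst).symm
    simpa using h
  -- relation 2
  have heq₂ : ∀ v : ℝ × ℝ × ℝ, (T v).2.1 = G₂ ((T v).1, v.2.1, v.2.2) := by
    intro v
    have hcomp : HasFDerivAt (fun q : ℝ × ℝ × ℝ => g₂ (Φ q).1 q.2.1 q.2.2)
        (G₂.comp ((((fst ℝ ℝ (ℝ × ℝ)).comp T).prod (snd ℝ ℝ (ℝ × ℝ))))) p := HasFDerivAt.comp p (f := fun q : ℝ × ℝ × ℝ => ((Φ q).1, q.2)) hGd₂ hF₁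
    have hL : HasFDerivAt (fun q : ℝ × ℝ × ℝ => (Φ q).2.1)
        (G₂.comp ((((fst ℝ ℝ (ℝ × ℝ)).comp T).prod (snd ℝ ℝ (ℝ × ℝ))))) p := by
      apply hcomp.congr_of_eventuallyEq
      filter_upwards with q using (hrel q).2.1
    have hR : HasFDerivAt (fun q : ℝ × ℝ × ℝ => (Φ q).2.1)
        ((fst ℝ ℝ ℝ).comp ((snd ℝ ℝ (ℝ × ℝ)).comp T)) p :=
      hasFDerivAt_fst.comp p (hasFDerivAt_snd.comp p hT)
    have h := congrArg (fun L => L v) (hL.unique hR).symm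
    simpa using h
  -- relation 3
  have heq₃ : ∀ v : ℝ × ℝ × ℝ, (T v).2.2 = G₃ ((T v).1, (T v).2.1, v.2.2) := by
    intro v
    have hcomp : HasFDerivAt (fun q : ℝ × ℝ × ℝ => g₃ (Φ q).1 (Φ q).2.1 q.2.2)
        (G₃.comp (((fst ℝ ℝ (ℝ × ℝ)).comp T).prod
          (((fst ℝ ℝ ℝ).comp ((snd ℝ ℝ (ℝ × ℝ)).comp T)).prod
            ((snd ℝ ℝ ℝ).comp (snd ℝ ℝ (ℝ × ℝ)))))) p := HasFDerivAt.comp p (f := fun q : ℝ × ℝ × ℝ => ((Φ q).1, (Φ q).2.1, q.2.2)) hGd₃ hF₃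
    have hL : HasFDerivAt (fun q : ℝ × ℝ × ℝ => (Φ q).2.2)
        (G₃.comp (((fst ℝ ℝ (ℝ × ℝ)).comp T).prod
          (((fst ℝ ℝ ℝ).comp ((snd ℝ ℝ (ℝ × ℝ)).comp T)).prod
            ((snd ℝ ℝ ℝ).comp (snd ℝ ℝ (ℝ × ℝ)))))) p := by
      apply hcomp.congr_of_eventuallyEq
      filter_upwards with q using (hrel q).2.2
    have hR : HasFDerivAt (fun q : ℝ × ℝ × ℝ => (Φ q).2.2)
        ((snd ℝ ℝ ℝ).comp ((snd ℝ ℝ (ℝ × ℝ)).comp T)) p :=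
      hasFDerivAt_snd.comp p (hasFDerivAt_snd.comp p hT)
    have h := congrArg (fun L => L v) (hL.unique hR).symm
    simpa using h
  -- scalar notation
  set a := G₁ (1,0,0) with hadef
  set b := G₁ (0,1,0)
  set c := G₁ (0,0,1)
  set g21 := G₂ (1,0,0)
  set g22 := G₂ (0,1,0)
  set g23 := G₂ (0,0,1)
  set g31 := G₃ (1,0,0)
  set g32 := G₃ (0,1,0)
  set g33 := G₃ (0,0,1)
  set t11 := (T (1,0,0)).1 with ht11
  set t21 := (T (1,0,0)).2.1 with ht21
  set t31 := (T (1,0,0)).2.2 with ht31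
  set t12 := (T (0,1,0)).1 with ht12
  set t22 := (T (0,1,0)).2.1 with ht22
  set t32 := (T (0,1,0)).2.2 with ht32
  set t13 := (T (0,0,1)).1 with ht13
  set t23 := (T (0,0,1)).2.1 with ht23
  set t33 := (T (0,0,1)).2.2 with ht33
  have ha : a ≠ 0 := by rw [← hpart₁]; exact hg₁' _ _ _
  have e11 : (1:ℝ) = t11 * a := by
    have := heq₁ (1,0,0); rw [clm_expand_aux] at this; simpa using this
  have e21 : t21 = t11 * g21 := by
    have := heq₂ (1,0,0); rw [clm_expand_aux] at this; simpa using this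
  have e22 : t22 = t12 * g21 + g22 := by
    have := heq₂ (0,1,0); rw [clm_expand_aux] at this; simpa using this
  have e23 : t23 = t13 * g21 + g23 := by
    have := heq₂ (0,0,1); rw [clm_expand_aux] at this; simpa using this
  have e31 : t31 = t11 * g31 + t21 * g32 := by
    have := heq₃ (1,0,0); rw [clm_expand_aux] at this; simpa using this
  have e32 : t32 = t12 * g31 + t22 * g32 := by
    have := heq₃ (0,1,0); rw [clm_expand_aux] at this; simpa using this
  have e33 : t33 = t13 * g31 + t23 * g32 + g33 := by
    have := heq₃ (0,0,1); rw [clm_expand_aux] at this; simpa using this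
  have hdet : LinearMap.det (T : (ℝ × ℝ × ℝ) →ₗ[ℝ] (ℝ × ℝ × ℝ)) = g22 * g33 * t11 := by
    rw [det_eq_aux]
    rw [Matrix.det_fin_three]
    show t11 * t22 * t33 - t11 * t23 * t32 - t12 * t21 * t33 + t12 * t23 * t31 +
        t13 * t21 * t32 - t13 * t22 * t31 = g22 * g33 * t11
    rw [e31, e32, e33, e21, e22, e23]
    ring
  rw [hpart₁, hpart₂, hpart₃, hdet]
  have ht11ne : t11 ≠ 0 := by
    intro h; rw [h] at e11; simp at e11
  constructor
  · intro h
    have h2 : g22 * g33 * t11 = a * t11 := by linear_combination h + e11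
    exact (mul_right_cancel₀ ht11ne h2).symm
  · intro h
    rw [← h]
    linear_combination -e11
end

section
/- Every C¹ vector field f possessing a first integral I with nonvanishing gradient can locally be written in skew-gradient form: there exists a skew-symmetric matrix function S(x) with f(x) = S(x)∇I(x), on the set where ∇I(x) ≠ 0. In fact one can take S(x) = (f(x)∇I(x)ᵀ - ∇I(x)f(x)ᵀ)/|∇I(x)|². -/
open Matrix

/-- A vector field with a first integral `I` can be written in skew-gradient
form `f = S ∇I` where `∇I ≠ 0`, with
`S = (f ∇Iᵀ - ∇I fᵀ)/‖∇I‖²`. -/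
theorem skew_gradient_form (n : ℕ)
    (f : (Fin n → ℝ) → (Fin n → ℝ)) (hf : ContDiff ℝ 1 f)
    (I : (Fin n → ℝ) → ℝ) (hI : ContDiff ℝ 1 I)
    (g : (Fin n → ℝ) → (Fin n → ℝ))
    (hg : ∀ x, g x = fun i => fderiv ℝ I x (Pi.single i 1))
    (hint : ∀ x, g x ⬝ᵥ f x = 0)
    (x : Fin n → ℝ) (hx : g x ≠ 0)
    (S : Matrix (Fin n) (Fin n) ℝ)
    (hSdef : S = Matrix.of fun i j =>
      (f x i * g x j - g x i * f x j) / (∑ k, g x k ^ 2)) :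
    Sᵀ = -S ∧ S.mulVec (g x) = f x := by
  have hnorm : (∑ k, g x k ^ 2) ≠ 0 := by
    intro h
    apply hx
    funext i
    have := (Finset.sum_eq_zero_iff_of_nonneg (fun k _ => sq_nonneg (g x k))).mp h i
      (Finset.mem_univ i)
    exact pow_eq_zero_iff (by norm_num) |>.mp this
  constructor
  · ext i j
    simp [hSdef, transpose_apply]
    ring
  · funext i
    have hdot : ∑ j, g x j * f x j = 0 := hint x
    have : S.mulVec (g x) i
        = (f x i * (∑ j, g x j ^ 2) - g x i * (∑ j, g x j * f x j)) / (∑ k, g x k ^ 2) := by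
      rw [eq_div_iff hnorm]
      simp only [hSdef, mulVec, dotProduct, of_apply]
      rw [Finset.sum_mul, Finset.mul_sum, Finset.mul_sum, ← Finset.sum_sub_distrib]
      apply Finset.sum_congr rfl
      intro j _
      rw [div_mul_eq_mul_div, div_mul_eq_mul_div, mul_div_assoc, div_self hnorm, mul_one]
      ring
    rw [this, hdot]
    field_simp
    ring
end

section
/- The two-integral discrete scheme preserves both integrals: if (x'ᵢ - xᵢ)/h = S̄ᵢⱼₖ ∇̄I(x,x')ⱼ ∇̄J(x,x')ₖ with S̄ a completely antisymmetric 3-tensor, and ∇̄I, ∇̄J are discrete gradients of I and J respectively, then I(x') = I(x) and J(x') = J(x). -/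
open Matrix

lemma antisym_sum_zero {n : ℕ} (T : Fin n → Fin n → ℝ)
    (hT : ∀ i j, T i j = - T j i) : ∑ i, ∑ j, T i j = 0 := by
  have h1 : ∑ i, ∑ j, T i j = - ∑ i, ∑ j, T i j := by
    conv_lhs => rw [Finset.sum_comm]
    rw [← Finset.sum_neg_distrib]
    refine Finset.sum_congr rfl fun i _ => ?_
    rw [← Finset.sum_neg_distrib]
    exact Finset.sum_congr rfl fun j _ => hT j i
  linarith

lemma pull_const {n : ℕ} (c : ℝ) (f g : Fin n → ℝ) :
    ∑ i, (c * f i) * g i = c * ∑ i, f i * g i := by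
  rw [Finset.mul_sum]
  exact Finset.sum_congr rfl fun i _ => by ring

/-- The two-integral discrete-gradient scheme with a completely antisymmetric
3-tensor preserves both integrals. -/
theorem two_integral_scheme_preserves_integrals (n : ℕ)
    (I J : (Fin n → ℝ) → ℝ)
    (DI DJ : (Fin n → ℝ) → (Fin n → ℝ) → (Fin n → ℝ))
    (hDI : ∀ x x', (x' - x) ⬝ᵥ DI x x' = I x' - I x)
    (hDJ : ∀ x x', (x' - x) ⬝ᵥ DJ x x' = J x' - J x)
    (S : (Fin n → ℝ) → (Fin n → ℝ) → Fin n → Fin n → Fin n → ℝ)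
    (hS12 : ∀ x x' i j k, S x x' i j k = -S x x' j i k)
    (hS23 : ∀ x x' i j k, S x x' i j k = -S x x' i k j)
    (h : ℝ) (hh : 0 < h) (x x' : Fin n → ℝ)
    (hstep : ∀ i, x' i - x i =
      h * ∑ j, ∑ k, S x x' i j k * DI x x' j * DJ x x' k) :
    I x' = I x ∧ J x' = J x := by
  have hS13 : ∀ i j k, S x x' i j k = -S x x' k j i := by
    intro i j k
    rw [hS12, hS23 x x' j i k, hS12 x x' j k i]
    ring
  constructor
  · have hI : (x' - x) ⬝ᵥ DI x x' = 0 := by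
      simp only [dotProduct, Pi.sub_apply]
      simp_rw [hstep]
      rw [pull_const]
      have rearr : ∑ i, (∑ j, ∑ k, S x x' i j k * DI x x' j * DJ x x' k) * DI x x' i
          = ∑ i, ∑ j, ∑ k, S x x' i j k * DI x x' j * DJ x x' k * DI x x' i := by
        refine Finset.sum_congr rfl fun i _ => ?_
        rw [Finset.sum_mul]
        exact Finset.sum_congr rfl fun j _ => Finset.sum_mul ..
      rw [rearr]
      have key : ∑ i, ∑ j, ∑ k, S x x' i j k * DI x x' j * DJ x x' k * DI x x' i = 0 := by
        apply antisym_sum_zero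
        intro i j
        rw [← Finset.sum_neg_distrib]
        refine Finset.sum_congr rfl fun k _ => ?_
        rw [hS12]; ring
      rw [key, mul_zero]
    rw [hDI] at hI; linarith
  · have hJ : (x' - x) ⬝ᵥ DJ x x' = 0 := by
      simp only [dotProduct, Pi.sub_apply]
      simp_rw [hstep]
      rw [pull_const]
      have rearr : ∑ i, (∑ j, ∑ k, S x x' i j k * DI x x' j * DJ x x' k) * DJ x x' i
          = ∑ i, ∑ k, ∑ j, S x x' i j k * DI x x' j * DJ x x' k * DJ x x' i := by
        refine Finset.sum_congr rfl fun i _ => ?_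
        rw [Finset.sum_mul, Finset.sum_comm]
        exact Finset.sum_congr rfl fun k _ => Finset.sum_mul ..
      rw [rearr]
      have key : ∑ i, ∑ k, ∑ j, S x x' i j k * DI x x' j * DJ x x' k * DJ x x' i = 0 := by
        apply antisym_sum_zero
        intro i k
        rw [← Finset.sum_neg_distrib]
        refine Finset.sum_congr rfl fun j _ => ?_
        rw [hS13]; ring
      rw [key, mul_zero]
    rw [hDJ] at hJ; linarith
end
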